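/- Let A be an integral domain satisfying condition (P2): for every nonconstant F ∈ A[Y] there exists b ∈ A with F(b) ∉ A^×. Then for every nonzero g ∈ A, the localization A_g also satisfies (P2): for every nonconstant F ∈ A_g[Y] there exists b ∈ A_g with F(b) not a unit of A_g. -/

import Mathlib

open Polynomial

/-- If the image of `x` in `Localization.Away g` is a unit, then `x` divides a power of `g`. -/
lemma aux_unit_dvd {A : Type*} [CommRing A] [IsDomain A] {g : A} (hg : g ≠ 0) {x : A}
    (h : IsUnit (algebraMap A (Localization.Away g) x)) : ∃ a : A, ∃ m : ℕ, x * a = g ^ m := by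
  have hinj : Function.Injective (algebraMap A (Localization.Away g)) :=
    IsLocalization.injective _ (powers_le_nonZeroDivisors_of_noZeroDivisors hg)
  obtain ⟨u, hu⟩ := h
  obtain ⟨⟨a, s⟩, hs⟩ := IsLocalization.surj (Submonoid.powers g) ((u⁻¹ : _) : Localization.Away g)
  obtain ⟨m, hm⟩ := s.2
  refine ⟨a, m, hinj ?_⟩
  have h1 : (algebraMap A (Localization.Away g)) x * ((u⁻¹ : _) : Localization.Away g) = 1 := by
    rw [← hu]; exact u.mul_inv
  calc (algebraMap A (Localization.Away g)) (x * a)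
      = (algebraMap A (Localization.Away g)) x * ((u⁻¹ : _) * (algebraMap A _) (s : A)) := by
        rw [map_mul, hs]
    _ = (algebraMap A (Localization.Away g)) (s : A) := by rw [← mul_assoc, h1, one_mul]
    _ = (algebraMap A (Localization.Away g)) (g ^ m) := by rw [show g ^ m = (s : A) from hm]

theorem stmt_8 {A : Type*} [CommRing A] [IsDomain A]
    (hP2 : ∀ F : Polynomial A, 0 < F.natDegree → ∃ b : A, ¬ IsUnit (F.eval b))
    (g : A) (hg : g ≠ 0)
    (F : Polynomial (Localization.Away g)) (hF : 0 < F.natDegree) :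
    ∃ b : Localization.Away g, ¬ IsUnit (F.eval b) := by
  by_contra hcon
  push_neg at hcon
  set S := Localization.Away g with hS
  haveI : IsDomain S :=
    IsLocalization.isDomain_of_le_nonZeroDivisors (R := A) (S := S)
      (powers_le_nonZeroDivisors_of_noZeroDivisors hg)
  set φ := algebraMap A S with hφ
  obtain ⟨b, hb⟩ := IsLocalization.integerNormalization_map_to_map (Submonoid.powers g) F
  set H := IsLocalization.integerNormalization (Submonoid.powers g) F with hH
  have hbsmul : ((b : A) • F) = C (φ (b : A)) * F := by
    rw [← IsScalarTower.algebraMap_smul S (b : A) F, Polynomial.smul_eq_C_mul]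
  rw [hbsmul] at hb
  -- every value of H at A maps to a unit
  have hval : ∀ z : A, IsUnit (φ (H.eval z)) := by
    intro z
    have h1 : (H.map φ).eval (φ z) = φ (H.eval z) := by
      rw [Polynomial.eval_map, Polynomial.eval₂_at_apply]
    rw [← h1, hb, Polynomial.eval_mul, Polynomial.eval_C]
    exact (IsLocalization.map_units S b).mul (hcon _)
  -- H is nonconstant
  have hdegH : 0 < H.natDegree := by
    have h2 : (H.map φ).natDegree = F.natDegree := by
      rw [hb, Polynomial.natDegree_C_mul (IsLocalization.map_units S b).ne_zero]
    have h3 : (H.map φ).natDegree ≤ H.natDegree := Polynomial.natDegree_map_le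
    omega
  set v := H.eval 0 with hv
  obtain ⟨a, m, hvm⟩ := aux_unit_dvd hg (hval 0)
  rw [← hv] at hvm
  have hvne : v ≠ 0 := by
    intro h; rw [h, zero_mul] at hvm; exact (pow_ne_zero m hg) hvm.symm
  -- H = C v + X * R
  obtain ⟨R, hR⟩ : X ∣ H - C v := by
    rw [Polynomial.X_dvd_iff]
    simp [Polynomial.coeff_zero_eq_eval_zero, hv]
  have hHeq : H = C v + X * R := by rw [← hR]; ring
  set T : Polynomial A := 1 + (C (g * v) * X) * R.comp (C (g * v ^ 2) * X) with hT
  have hkey : C v * T = H.comp (C (g * v ^ 2) * X) := by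
    rw [hHeq]
    simp only [Polynomial.add_comp, Polynomial.C_comp, Polynomial.mul_comp, Polynomial.X_comp, hT]
    rw [mul_add, mul_one]
    congr 1
    rw [← mul_assoc, ← mul_assoc, ← Polynomial.C_mul]
    ring_nf
  have hdegT : 0 < T.natDegree := by
    have h4 : (C v * T).natDegree = H.natDegree := by
      rw [hkey, Polynomial.natDegree_comp]
      have h5 : (C (g * v ^ 2) * X).natDegree = 1 := by
        rw [Polynomial.natDegree_C_mul (by simp [hg, hvne] : g * v ^ 2 ≠ 0),
          Polynomial.natDegree_X]
      rw [h5, mul_one]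
    rw [Polynomial.natDegree_C_mul hvne] at h4
    omega
  obtain ⟨w, hw⟩ := hP2 T hdegT
  set s := T.eval w with hs
  have hseval : s = 1 + g * v * w * R.eval (g * v ^ 2 * w) := by
    simp [hs, hT]
  have hvs : v * s = H.eval (g * v ^ 2 * w) := by
    have h6 := congrArg (Polynomial.eval w) hkey
    simpa [Polynomial.eval_comp] using h6
  have hφs : IsUnit (φ s) := by
    have h5 : IsUnit (φ v * φ s) := by rw [← map_mul, hvs]; exact hval _
    exact isUnit_of_mul_isUnit_right h5
  obtain ⟨a', m', hsm⟩ := aux_unit_dvd hg hφs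
  have hdvd1 : s ∣ (s - 1) ^ m' := by
    have h6 : s - 1 = g * (v * w * R.eval (g * v ^ 2 * w)) := by rw [hseval]; ring
    rw [h6, mul_pow]
    exact Dvd.dvd.mul_right ⟨a', hsm.symm⟩ _
  have hdvd2 : s ∣ (s - 1) ^ m' - (-1) ^ m' := by
    have h7 := sub_dvd_pow_sub_pow (s - 1) (-1) m'
    simpa using h7
  have hdvd3 : s ∣ (-1 : A) ^ m' := by
    have h8 := dvd_sub hdvd1 hdvd2
    simpa using h8
  exact hw (isUnit_of_dvd_unit hdvd3 ((isUnit_one.neg).pow m'))
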